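/- Let λ be a partition, let (i₀,j₀) ∈ λ* be a square of the extended partition, let ρ' = rank(λ(i₀,j₀)), and let M(i₀,j₀) be the (ρ'+1)×(ρ'+1) matrix over R whose (r,s)-entry is P_{i₀−1+r, j₀−1+s} for 1 ≤ r,s ≤ ρ'+1. Then det M(i₀,j₀) = ∏_{k=0}^{ρ'−1} A_{i₀+k, j₀+k} (note A_{i₀+ρ', j₀+ρ'} = 1). -/

import Mathlib

open MvPolynomial

/-- Membership of the (0-indexed) square `(i,j)` in the extended diagram `λ*`,
where `f k` is the `(k+1)`-st part of the partition `λ`. -/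
def MemExt (f : ℕ → ℕ) (i j : ℕ) : Prop := (i = 0 ∨ 0 < f (i - 1)) ∧ j ≤ f i

/-- `A_{r+1,s+1}`: the product of the variables over all squares of `λ(r+1,s+1)`
(0-indexed corner `(r,s)`; the variable of the 1-based square `(u,v)` is `X (u-1, v-1)`). -/
noncomputable def Apoly (f : ℕ → ℕ) (r s : ℕ) : MvPolynomial (ℕ × ℕ) ℤ :=
  ∏ᶠ (u : ℕ) (v : ℕ) (_ : v < f (r + u) - s), X (r + u, s + v)

/-- `P_{r+1,s+1}`: the generating polynomial of the skew diagrams `λ(r+1,s+1) \ μ`,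
summed over all partitions `μ` contained in `λ(r+1,s+1)` (0-indexed corner `(r,s)`). -/
noncomputable def Ppoly (f : ℕ → ℕ) (r s : ℕ) : MvPolynomial (ℕ × ℕ) ℤ :=
  ∑ᶠ μ ∈ {μ : ℕ → ℕ | Antitone μ ∧ ∀ k, μ k ≤ f (r + k) - s},
    ∏ᶠ (u : ℕ) (v : ℕ) (_ : v < f (r + u) - s) (_ : μ u ≤ v), X (r + u, s + v)


noncomputable section
namespace DetAux

variable (f : ℕ → ℕ)

/-- weight of row `a` with path at column `c`. -/
def rw1 (a c : ℕ) : MvPolynomial (ℕ × ℕ) ℤ := ∏ b ∈ Finset.Ico c (f a), X (a, b)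

/-- weight of a whole path given by its column function `d`. -/
def wt (NB : ℕ) (d : ℕ → ℕ) : MvPolynomial (ℕ × ℕ) ℤ :=
  ∏ a ∈ Finset.range NB, rw1 f a (d a)

/-- the column function of the path with start row `R`, sink column `C`, partition `μ`. -/
def mkd (CM R C : ℕ) (μ : ℕ → ℕ) : ℕ → ℕ := fun a => if a < R then CM else C + μ (a - R)

def Sset (R C : ℕ) : Set (ℕ → ℕ) := {μ | Antitone μ ∧ ∀ k, μ k ≤ f (R + k) - C}

variable {f}

lemma rw1_eq_one {a c : ℕ} (h : f a ≤ c) : rw1 f a c = 1 := by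
  rw [rw1, Finset.Ico_eq_empty (by omega), Finset.prod_empty]

lemma zero_mem_Sset (R C : ℕ) : (fun _ => 0) ∈ Sset f R C :=
  ⟨antitone_const, fun _ => Nat.zero_le _⟩

lemma Sset_finite (hf : Antitone f) {N : ℕ} (hN : f N = 0) (R C : ℕ) :
    (Sset f R C).Finite := by
  have hsub : Sset f R C ⊆
      (fun g : Fin N → Fin (f 0 + 1) => fun k : ℕ => if h : k < N then (g ⟨k, h⟩ : ℕ) else 0) ''
        Set.univ := by
    intro μ hμ
    have hb : ∀ k, μ k ≤ f 0 := by
      intro k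
      exact le_trans (le_trans (hμ.2 k) (Nat.sub_le _ _)) (hf (Nat.zero_le _))
    refine ⟨fun k => ⟨μ k, by have := hb k; omega⟩, trivial, ?_⟩
    funext k
    by_cases h : k < N
    · simp [h]
    · simp only [h, dif_neg, not_false_iff]
      have h1 : f (R + k) = 0 := by
        have := hf (show N ≤ R + k by omega)
        omega
      have := hμ.2 k
      omega
  exact (Set.finite_univ.image _).subset hsub

/-- the finset of admissible partitions. -/
def SFin (hf : Antitone f) {N : ℕ} (hN : f N = 0) (R C : ℕ) : Finset (ℕ → ℕ) :=
  (Sset_finite hf hN R C).toFinset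

lemma mem_SFin {hf : Antitone f} {N : ℕ} {hN : f N = 0} {R C : ℕ} {μ : ℕ → ℕ} :
    μ ∈ SFin hf hN R C ↔ Antitone μ ∧ ∀ k, μ k ≤ f (R + k) - C := by
  rw [SFin, Set.Finite.mem_toFinset]; rfl

/-- inner row computation -/
lemma inner_row (a C m : ℕ) :
    (∏ᶠ (v : ℕ) (_ : v < f a - C) (_ : m ≤ v), (X (a, C + v) : MvPolynomial (ℕ × ℕ) ℤ))
      = rw1 f a (C + m) := by
  classical
  have h1 : ∀ v : ℕ, (∏ᶠ (_ : v < f a - C) (_ : m ≤ v), (X (a, C + v) : MvPolynomial (ℕ × ℕ) ℤ))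
      = if v < f a - C ∧ m ≤ v then X (a, C + v) else 1 := by
    intro v
    rw [finprod_eq_if (p := m ≤ v), finprod_eq_if]
    by_cases h : v < f a - C <;> by_cases h' : m ≤ v <;> simp [h, h']
  calc (∏ᶠ (v : ℕ) (_ : v < f a - C) (_ : m ≤ v), (X (a, C + v) : MvPolynomial (ℕ × ℕ) ℤ))
      = ∏ᶠ (v : ℕ), if v < f a - C ∧ m ≤ v then (X (a, C + v) : MvPolynomial (ℕ × ℕ) ℤ) else 1 := by
        exact finprod_congr h1
    _ = ∏ v ∈ Finset.range (f a - C),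
          (if v < f a - C ∧ m ≤ v then (X (a, C + v) : MvPolynomial (ℕ × ℕ) ℤ) else 1) := by
        apply finprod_eq_prod_of_mulSupport_subset
        intro v hv
        simp only [Function.mem_mulSupport] at hv
        by_contra hvr
        simp only [Finset.coe_range, Set.mem_Iio, not_lt] at hvr
        exact hv (by rw [if_neg (by omega)])
    _ = ∏ v ∈ (Finset.range (f a - C)).filter (fun v => v < f a - C ∧ m ≤ v),
          (X (a, C + v) : MvPolynomial (ℕ × ℕ) ℤ) := by
        rw [Finset.prod_filter]
    _ = ∏ v ∈ Finset.Ico m (f a - C), (X (a, C + v) : MvPolynomial (ℕ × ℕ) ℤ) := by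
        apply Finset.prod_congr _ (fun _ _ => rfl)
        ext v
        simp only [Finset.mem_filter, Finset.mem_range, Finset.mem_Ico]
        omega
    _ = ∏ b ∈ Finset.Ico (C + m) (C + (f a - C)), (X (a, b) : MvPolynomial (ℕ × ℕ) ℤ) := by
        rw [← Finset.map_add_left_Ico, Finset.prod_map]
        rfl
    _ = rw1 f a (C + m) := by
        rw [rw1]
        apply Finset.prod_congr _ (fun _ _ => rfl)
        ext b
        simp only [Finset.mem_Ico]
        omega

lemma wt_eq_rows {CM NB R C N : ℕ} (hf : Antitone f) (hN : f N = 0) (hNB : R + N ≤ NB)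
    (hCM : f 0 < CM) (μ : ℕ → ℕ) :
    wt f NB (mkd CM R C μ) = ∏ u ∈ Finset.range N, rw1 f (R + u) (C + μ u) := by
  have h1 : wt f NB (mkd CM R C μ) = ∏ a ∈ Finset.Ico R (R + N), rw1 f a (mkd CM R C μ a) := by
    rw [wt]
    symm
    apply Finset.prod_subset
    · intro a ha
      simp only [Finset.mem_Ico] at ha
      simp only [Finset.mem_range]
      omega
    · intro a _ ha
      simp only [Finset.mem_Ico, not_and, not_lt] at ha
      by_cases h : a < R
      · rw [mkd, if_pos h]
        exact rw1_eq_one (le_trans (hf (Nat.zero_le a)) (le_of_lt hCM))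
      · apply rw1_eq_one
        have : f a = 0 := by
          have := hf (show N ≤ a by omega)
          omega
        omega
  rw [h1, Finset.prod_Ico_eq_prod_range]
  rw [show R + N - R = N by omega]
  apply Finset.prod_congr rfl
  intro u _
  rw [mkd]
  simp only [if_neg (show ¬ R + u < R by omega)]
  rw [show R + u - R = u by omega]

lemma summand_eq {CM NB R C N : ℕ} (hf : Antitone f) (hN : f N = 0) (hNB : R + N ≤ NB)
    (hCM : f 0 < CM) (μ : ℕ → ℕ) :
    (∏ᶠ (u : ℕ) (v : ℕ) (_ : v < f (R + u) - C) (_ : μ u ≤ v),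
        (X (R + u, C + v) : MvPolynomial (ℕ × ℕ) ℤ))
      = wt f NB (mkd CM R C μ) := by
  rw [wt_eq_rows hf hN hNB hCM μ]
  have h1 : ∀ u : ℕ, (∏ᶠ (v : ℕ) (_ : v < f (R + u) - C) (_ : μ u ≤ v),
      (X (R + u, C + v) : MvPolynomial (ℕ × ℕ) ℤ)) = rw1 f (R + u) (C + μ u) :=
    fun u => inner_row (R + u) C (μ u)
  calc (∏ᶠ (u : ℕ) (v : ℕ) (_ : v < f (R + u) - C) (_ : μ u ≤ v),
        (X (R + u, C + v) : MvPolynomial (ℕ × ℕ) ℤ))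
      = ∏ᶠ (u : ℕ), rw1 f (R + u) (C + μ u) := finprod_congr h1
    _ = ∏ u ∈ Finset.range N, rw1 f (R + u) (C + μ u) := by
        apply finprod_eq_prod_of_mulSupport_subset
        intro u hu
        simp only [Function.mem_mulSupport] at hu
        by_contra hur
        simp only [Finset.coe_range, Set.mem_Iio, not_lt] at hur
        apply hu
        apply rw1_eq_one
        have : f (R + u) = 0 := by
          have := hf (show N ≤ R + u by omega)
          omega
        omega

lemma Apoly_summand_eq {CM NB R C N : ℕ} (hf : Antitone f) (hN : f N = 0) (hNB : R + N ≤ NB)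
    (hCM : f 0 < CM) :
    Apoly f R C = wt f NB (mkd CM R C (fun _ => 0)) := by
  rw [← summand_eq hf hN hNB hCM (fun _ => 0), Apoly]
  apply finprod_congr; intro u
  apply finprod_congr; intro v
  apply finprod_congr; intro _
  rw [finprod_eq_if, if_pos (Nat.zero_le v)]

lemma Ppoly_eq {CM NB R C N : ℕ} (hf : Antitone f) (hN : f N = 0) (hNB : R + N ≤ NB)
    (hCM : f 0 < CM) :
    Ppoly f R C = ∑ μ ∈ SFin hf hN R C, wt f NB (mkd CM R C μ) := by
  rw [Ppoly]
  have hset : {μ : ℕ → ℕ | Antitone μ ∧ ∀ k, μ k ≤ f (R + k) - C}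
      = ↑(SFin hf hN R C) := by
    rw [SFin, Set.Finite.coe_toFinset]; rfl
  rw [hset, finsum_mem_coe_finset]
  exact Finset.sum_congr rfl (fun μ _ => summand_eq hf hN hNB hCM μ)


/-! ### Part B : abstract path lemmas -/

/-- validity of a path column function. -/
structure Vd (f : ℕ → ℕ) (CM R C : ℕ) (d : ℕ → ℕ) : Prop where
  anti : Antitone d
  top : ∀ a, a < R → d a = CM
  lb : ∀ a, R ≤ a → C ≤ d a
  ub : ∀ a, R ≤ a → d a ≤ max (f a) C
  leCM : ∀ a, d a ≤ CM

/-- the point `p` lies on the path. -/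
def OnP (R : ℕ) (d : ℕ → ℕ) (p : ℕ × ℕ) : Prop :=
  R ≤ p.1 ∧ d p.1 ≤ p.2 ∧ p.2 ≤ d (p.1 - 1)

lemma Vd_mkd (hf : Antitone f) {CM R C : ℕ} {μ : ℕ → ℕ} (hμ : μ ∈ Sset f R C)
    (hCM : C + f 0 ≤ CM) : Vd f CM R C (mkd CM R C μ) := by
  have hb : ∀ k, μ k ≤ f 0 := fun k =>
    le_trans (le_trans (hμ.2 k) (Nat.sub_le _ _)) (hf (Nat.zero_le _))
  have hle : ∀ a, mkd CM R C μ a ≤ CM := by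
    intro a
    rw [mkd]
    by_cases h : a < R
    · rw [if_pos h]
    · rw [if_neg h]
      have := hb (a - R)
      omega
  refine ⟨?_, ?_, ?_, ?_, hle⟩
  · intro a b hab
    simp only [mkd]
    by_cases h1 : b < R
    · rw [if_pos h1, if_pos (by omega)]
    · rw [if_neg h1]
      by_cases h2 : a < R
      · rw [if_pos h2]
        have := hb (b - R); omega
      · rw [if_neg h2]
        have := hμ.1 (show a - R ≤ b - R by omega)
        omega
  · intro a ha; rw [mkd, if_pos ha]
  · intro a ha; rw [mkd, if_neg (by omega)]; omega
  · intro a ha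
    rw [mkd, if_neg (by omega)]
    have := hμ.2 (a - R)
    rw [show R + (a - R) = a by omega] at this
    omega

lemma L_deep {CM R C : ℕ} {d : ℕ → ℕ} (hf : Antitone f) {N : ℕ} (hN : f N = 0)
    (v : Vd f CM R C d) : ∀ a, R ≤ a → N ≤ a → d a = C := by
  intro a h1 h2
  have hfa : f a = 0 := by have := hf h2; omega
  have := v.ub a h1
  have := v.lb a h1
  omega

/-- paths with reversed endpoints must intersect. -/
lemma L_compat {CM R1 C1 R2 C2 : ℕ} {d1 d2 : ℕ → ℕ} (hf : Antitone f) {N : ℕ} (hN : f N = 0)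
    (v1 : Vd f CM R1 C1 d1) (v2 : Vd f CM R2 C2 d2) (hR : R1 < R2) (hC : C2 < C1) :
    ∃ p, OnP R1 d1 p ∧ OnP R2 d2 p := by
  classical
  have hex : ∃ a, R2 ≤ a ∧ d2 a ≤ d1 a := by
    refine ⟨R2 + N, by omega, ?_⟩
    rw [L_deep hf hN v1 _ (by omega) (by omega), L_deep hf hN v2 _ (by omega) (by omega)]
    omega
  obtain ⟨ha1R, ha1le⟩ := Nat.find_spec hex
  refine ⟨(Nat.find hex, d1 (Nat.find hex)), ⟨?_, ?_, ?_⟩, ?_, ?_, ?_⟩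
  · show R1 ≤ Nat.find hex; omega
  · exact le_refl _
  · exact v1.anti (show Nat.find hex - 1 ≤ Nat.find hex by omega)
  · exact ha1R
  · exact ha1le
  · show d1 (Nat.find hex) ≤ d2 (Nat.find hex - 1)
    by_cases hcase : Nat.find hex = R2
    · rw [v2.top _ (by omega)]
      exact v1.leCM _
    · have hnot : ¬ (R2 ≤ Nat.find hex - 1 ∧ d2 (Nat.find hex - 1) ≤ d1 (Nat.find hex - 1)) :=
        Nat.find_min hex (show Nat.find hex - 1 < Nat.find hex by omega)
      have h2 : d1 (Nat.find hex - 1) < d2 (Nat.find hex - 1) := by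
        rcases not_and_or.mp hnot with h | h
        · omega
        · omega
      exact le_trans (v1.anti (show Nat.find hex - 1 ≤ Nat.find hex by omega)) (by omega)

/-- if the next path is straight and there is no intersection, this path is straight too. -/
lemma L_beta {CM R1 C1 : ℕ} {d1 d2 : ℕ → ℕ}
    (v1 : Vd f CM R1 C1 d1) (v2 : Vd f CM (R1 + 1) (C1 + 1) d2)
    (hd2 : ∀ a, R1 + 1 ≤ a → d2 a = C1 + 1)
    (hns : ∀ p, ¬ (OnP R1 d1 p ∧ OnP (R1 + 1) d2 p)) :
    ∀ a, R1 ≤ a → d1 a = C1 := by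
  have hkey : d1 R1 ≤ C1 := by
    by_contra hgt
    apply hns (R1 + 1, max (d1 (R1 + 1)) (C1 + 1))
    constructor
    · refine ⟨by omega, le_max_left _ _, ?_⟩
      rw [show R1 + 1 - 1 = R1 by omega]
      have := v1.anti (show R1 ≤ R1 + 1 by omega)
      omega
    · refine ⟨le_refl _, by rw [hd2 _ (le_refl _)]; exact le_max_right _ _, ?_⟩
      rw [v2.top (R1 + 1 - 1) (by omega)]
      exact max_le (v1.leCM _) (le_trans (v2.lb _ (le_refl _)) (v2.leCM _))
  intro a ha
  have h1 := v1.lb a ha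
  have h2 := v1.anti ha
  omega

/-- key lemma: the head of the other path stays valid for the swapped sink. -/
lemma L_key {CM R1 C1 R2 C2 A c : ℕ} {d1 d2 : ℕ → ℕ} (hf : Antitone f)
    (v1 : Vd f CM R1 C1 d1) (v2 : Vd f CM R2 C2 d2) (hC : C1 ≠ C2)
    (hA1 : OnP R1 d1 (A, c)) (hA2 : OnP R2 d2 (A, c)) (h1A : 1 ≤ A)
    (hmin : ∀ a' c', OnP R1 d1 (a', c') → OnP R2 d2 (a', c') → A < a' ∨ (A = a' ∧ c ≤ c'))
    (hrank : R1 = A → ∀ b, b < A → C2 ≤ f b) :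
    ∀ a, R2 ≤ a → a < A → C1 ≤ d2 a ∧ d2 a ≤ max (f a) C1 := by
  intro a haR haA
  have hA1R : R1 ≤ A := hA1.1
  have hA1l : d1 A ≤ c := hA1.2.1
  have hA1u : c ≤ d1 (A - 1) := hA1.2.2
  have hA2R : R2 ≤ A := hA2.1
  have hA2l : d2 A ≤ c := hA2.2.1
  have hA2u : c ≤ d2 (A - 1) := hA2.2.2
  have hlow : C1 ≤ d2 a := by
    have h1 : d2 (A - 1) ≤ d2 a := v2.anti (by omega)
    have h2 : C1 ≤ d1 A := v1.lb A hA1R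
    omega
  refine ⟨hlow, ?_⟩
  by_contra hub
  push_neg at hub
  -- d2 a is above the diagram and equals C2
  have hfa : f a < d2 a := by omega
  have hC1C2 : C1 < C2 := by
    have := v2.ub a haR
    omega
  have hd2a : d2 a = C2 := by
    have := v2.ub a haR
    have := v2.lb a haR
    omega
  have hpin : ∀ b, a ≤ b → d2 b = C2 := by
    intro b hb
    have := v2.anti hb
    have := v2.lb b (by omega)
    omega
  have hcC2 : c = C2 := by
    have h1 := hpin A (by omega)
    have h2 := hpin (A - 1) (by omega)
    omega
  rcases eq_or_lt_of_le hA1R with hR1A | hR1A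
  · -- R1 = A : use the rank hypothesis
    have := hrank hR1A a haA
    omega
  · -- R1 < A
    by_cases hd1 : d1 (A - 1) = C2
    · have hO1 : OnP R1 d1 (A - 1, C2) := by
        refine ⟨show R1 ≤ A - 1 by omega, show d1 (A-1) ≤ C2 by omega, ?_⟩
        show C2 ≤ d1 (A - 1 - 1)
        rw [← hd1]
        exact v1.anti (by omega)
      have hO2 : OnP R2 d2 (A - 1, C2) := by
        refine ⟨show R2 ≤ A - 1 by omega, show d2 (A-1) ≤ C2 by rw [hpin (A-1) (by omega)], ?_⟩
        show C2 ≤ d2 (A - 1 - 1)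
        by_cases hcase : R2 ≤ A - 1 - 1
        · exact v2.lb _ hcase
        · rw [v2.top _ (by omega)]
          exact le_trans (v2.lb R2 (le_refl _)) (v2.leCM _)
      have hq := hmin (A - 1) C2 hO1 hO2
      omega
    · have hgt : C2 < d1 (A - 1) := by omega
      have hub1 := v1.ub (A - 1) (by omega)
      have hle : d1 (A - 1) ≤ f (A - 1) := by omega
      have : f (A - 1) ≤ f a := hf (by omega)
      omega

/-! ### Part C : configurations -/

abbrev Cfg (n : ℕ) := Σ _ : Equiv.Perm (Fin n), (Fin n → ℕ → ℕ)

variable (i₀ j₀ CM : ℕ) {n : ℕ}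

/-- the path family of a configuration. -/
def D (x : Cfg n) (i : Fin n) : ℕ → ℕ := mkd CM (i₀ + ((x.1 i : Fin n) : ℕ)) (j₀ + (i : ℕ)) (x.2 i)

def SharedPt (x : Cfg n) (p : ℕ × ℕ) : Prop :=
  ∃ i j : Fin n, i ≠ j ∧ OnP (i₀ + ((x.1 i : Fin n) : ℕ)) (D i₀ j₀ CM x i) p ∧
    OnP (i₀ + ((x.1 j : Fin n) : ℕ)) (D i₀ j₀ CM x j) p

variable (f) in
def bigset (hf : Antitone f) {N : ℕ} (hN : f N = 0) (n : ℕ) : Finset (Cfg n) :=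
  Finset.univ.sigma (fun σ : Equiv.Perm (Fin n) =>
    Fintype.piFinset (fun i : Fin n => SFin hf hN (i₀ + ((σ i : Fin n) : ℕ)) (j₀ + (i : ℕ))))

lemma mem_bigset {hf : Antitone f} {N : ℕ} {hN : f N = 0} {x : Cfg n} :
    x ∈ bigset f i₀ j₀ hf hN n ↔ ∀ i : Fin n, x.2 i ∈ Sset f (i₀ + ((x.1 i : Fin n) : ℕ)) (j₀ + (i : ℕ)) := by
  rw [bigset, Finset.mem_sigma]
  simp only [Finset.mem_univ, true_and, Fintype.mem_piFinset]
  constructor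
  · intro h i; exact mem_SFin.mp (h i)
  · intro h i; exact mem_SFin.mpr (h i)

def good (n : ℕ) : Cfg n := ⟨1, fun _ _ => 0⟩

lemma good_mem {hf : Antitone f} {N : ℕ} {hN : f N = 0} : good n ∈ bigset f i₀ j₀ hf hN n := by
  rw [mem_bigset]
  intro i
  exact zero_mem_Sset _ _

lemma D_good (i : Fin n) : D i₀ j₀ CM (good n) i = mkd CM (i₀ + (i : ℕ)) (j₀ + (i : ℕ)) (fun _ => 0) := by
  rw [D, good]
  rfl

/-- the good configuration has no shared point. -/
lemma good_no_shared (p : ℕ × ℕ) : ¬ SharedPt i₀ j₀ CM (good n) p := by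
  rintro ⟨i, j, hij, hOi, hOj⟩
  -- wlog i < j
  have key : ∀ i j : Fin n, (i : ℕ) < (j : ℕ) →
      OnP (i₀ + ((((good n).1 : Equiv.Perm (Fin n)) i : Fin n) : ℕ)) (D i₀ j₀ CM (good n) i) p →
      OnP (i₀ + ((((good n).1 : Equiv.Perm (Fin n)) j : Fin n) : ℕ)) (D i₀ j₀ CM (good n) j) p → False := by
    intro i j hij hOi hOj
    have hOi1 : i₀ + (i : ℕ) ≤ p.1 := hOi.1
    have hOj1 : i₀ + (j : ℕ) ≤ p.1 := hOj.1
    have e1 : D i₀ j₀ CM (good n) i p.1 = j₀ + (i : ℕ) := by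
      rw [D_good, mkd, if_neg (by omega)]; omega
    have e2 : D i₀ j₀ CM (good n) i (p.1 - 1) = j₀ + (i : ℕ) := by
      rw [D_good, mkd, if_neg (by omega)]; omega
    have e3 : D i₀ j₀ CM (good n) j p.1 = j₀ + (j : ℕ) := by
      rw [D_good, mkd, if_neg (by omega)]; omega
    have h1 : D i₀ j₀ CM (good n) i p.1 ≤ p.2 := hOi.2.1
    have h2 : p.2 ≤ D i₀ j₀ CM (good n) i (p.1 - 1) := hOi.2.2
    have h3 : D i₀ j₀ CM (good n) j p.1 ≤ p.2 := hOj.2.1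
    rw [e1] at h1; rw [e2] at h2; rw [e3] at h3
    omega
  rcases lt_or_gt_of_ne (fun h : (i : ℕ) = (j : ℕ) => hij (Fin.ext h)) with h | h
  · exact key i j h hOi hOj
  · exact key j i h hOj hOi

lemma perm_eq_one_of_no_inversion {σ : Equiv.Perm (Fin n)}
    (h : ¬ ∃ a b : Fin n, a < b ∧ σ b < σ a) : σ = 1 := by
  haveI : WellFoundedLT (Fin n) := inferInstance
  push_neg at h
  have hsm : StrictMono (σ : Fin n → Fin n) := by
    intro a b hab
    rcases lt_or_eq_of_le (h a b hab) with h' | h'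
    · exact h'
    · exact absurd (σ.injective h') (ne_of_lt hab)
  ext x
  have h1 : ∀ y : Fin n, y ≤ σ y := fun y => hsm.le_apply
  have h2 : StrictMono ((σ⁻¹ : Equiv.Perm (Fin n)) : Fin n → Fin n) := by
    intro a b hab
    rcases lt_trichotomy ((σ⁻¹ : Equiv.Perm (Fin n)) a) ((σ⁻¹ : Equiv.Perm (Fin n)) b) with h' | h' | h'
    · exact h'
    · have := congrArg σ h'
      simp only [Equiv.Perm.inv_def, Equiv.apply_symm_apply] at this
      rw [this] at hab; exact absurd hab (lt_irrefl _)
    · have := hsm h'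
      simp only [Equiv.Perm.inv_def, Equiv.apply_symm_apply] at this
      exact absurd (lt_trans hab this) (lt_irrefl _)
  have h3 := h2.le_apply (x := σ x)
  simp only [Equiv.Perm.inv_def, Equiv.symm_apply_apply] at h3
  exact le_antisymm h3 (h1 x)

/-- every valid configuration other than `good` has a shared point. -/
lemma exists_shared (hf : Antitone f) {N : ℕ} (hN : f N = 0)
    (hCM : j₀ + n + f 0 ≤ CM)
    (hreg : ∀ m : ℕ, f (i₀ + (n - 1) + m) ≤ j₀ + (n - 1))
    {x : Cfg n} (hx : x ∈ bigset f i₀ j₀ hf hN n) (hne : x ≠ good n) :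
    ∃ p, SharedPt i₀ j₀ CM x p := by
  obtain ⟨σp, μp⟩ := x
  by_contra hn
  push_neg at hn
  apply hne
  rw [mem_bigset] at hx
  simp only at hx
  have hvd : ∀ i : Fin n, Vd f CM (i₀ + ((σp i : Fin n) : ℕ)) (j₀ + (i : ℕ))
      (D i₀ j₀ CM ⟨σp, μp⟩ i) := by
    intro i
    exact Vd_mkd hf (hx i) (by have : (i : ℕ) < n := i.isLt; omega)
  -- step 1 : the permutation is the identity
  have hσ : σp = 1 := by
    apply perm_eq_one_of_no_inversion
    rintro ⟨a, b, hab, hba⟩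
    obtain ⟨p, hp1, hp2⟩ := L_compat hf hN (v1 := hvd b) (v2 := hvd a)
      (by have : ((σp b : Fin n) : ℕ) < ((σp a : Fin n) : ℕ) := hba; omega)
      (by have : (a : ℕ) < (b : ℕ) := hab; omega)
    exact hn p ⟨b, a, (ne_of_lt hab).symm, hp1, hp2⟩
  subst hσ
  -- step 2 : all partitions are zero, by downward induction
  have hzero : ∀ t : ℕ, ∀ i : Fin n, n - 1 - (i : ℕ) = t → ∀ k, μp i k = 0 := by
    intro t
    induction t with
    | zero =>
      intro i hi k
      have hin : (i : ℕ) = n - 1 := by have := i.isLt; omega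
      have hb := (hx i).2 k
      simp only [Equiv.Perm.one_apply] at hb
      have : f (i₀ + (i : ℕ) + k) ≤ j₀ + (i : ℕ) := by
        rw [hin]
        exact hreg k
      omega
    | succ t ih =>
      intro i hi k
      have hilt : (i : ℕ) + 1 < n := by have := i.isLt; omega
      set isucc : Fin n := ⟨(i : ℕ) + 1, hilt⟩ with hisucc
      have hnext : ∀ m, μp isucc m = 0 := ih isucc (by simp [hisucc]; omega)
      -- the next path is straight
      have hd2 : ∀ a, (i₀ + (i : ℕ)) + 1 ≤ a → D i₀ j₀ CM ⟨1, μp⟩ isucc a = (j₀ + (i : ℕ)) + 1 := by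
        intro a ha
        rw [D, mkd]
        simp only [Equiv.Perm.one_apply, hisucc]
        rw [if_neg (by simp; omega), hnext]
        simp only [Nat.add_zero]
        omega
      have hv1 : Vd f CM (i₀ + (i : ℕ)) (j₀ + (i : ℕ)) (D i₀ j₀ CM ⟨1, μp⟩ i) := by
        have := hvd i; simpa using this
      have hv2 : Vd f CM ((i₀ + (i : ℕ)) + 1) ((j₀ + (i : ℕ)) + 1) (D i₀ j₀ CM ⟨1, μp⟩ isucc) := by
        have h := hvd isucc
        have e1 : ((1 : Equiv.Perm (Fin n)) isucc : ℕ) = (i : ℕ) + 1 := by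
          rw [Equiv.Perm.one_apply, hisucc]
        rw [e1] at h
        have e2 : (isucc : ℕ) = (i : ℕ) + 1 := by simp [hisucc]
        rw [e2] at h
        exact h
      have hns : ∀ p, ¬ (OnP (i₀ + (i : ℕ)) (D i₀ j₀ CM ⟨1, μp⟩ i) p ∧
          OnP ((i₀ + (i : ℕ)) + 1) (D i₀ j₀ CM ⟨1, μp⟩ isucc) p) := by
        intro p hp
        refine hn p ⟨i, isucc, ?_, hp.1, hp.2⟩
        intro h; rw [Fin.ext_iff] at h; simp [hisucc] at h
      have hstr := L_beta (v1 := hv1) (v2 := hv2) hd2 hns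
      have := hstr (i₀ + (i : ℕ) + k) (by omega)
      simp only [D, mkd, Equiv.Perm.one_apply] at this
      simp only [show ¬ (i₀ + (i : ℕ) + k < i₀ + (i : ℕ)) by omega, ↓reduceIte] at this
      rw [show i₀ + (i : ℕ) + k - (i₀ + (i : ℕ)) = k by omega] at this
      omega
  have hfun : μp = fun _ _ => 0 := by
    funext i k
    exact hzero (n - 1 - (i : ℕ)) i rfl k
  rw [good, hfun]

/-! ### Part C2 : the tail swap -/

def spl (A : ℕ) (d e : ℕ → ℕ) : ℕ → ℕ := fun a => if a < A then d a else e a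

/-- the new partition for column `iI` after the swap at row `A`. -/
def nμ (x : Cfg n) (A : ℕ) (iI iJ : Fin n) : ℕ → ℕ :=
  fun u => spl A (D i₀ j₀ CM x iJ) (D i₀ j₀ CM x iI) ((i₀ + ((x.1 iJ : Fin n) : ℕ)) + u)
    - (j₀ + (iI : ℕ))

def swapCfg (x : Cfg n) (A : ℕ) (iI iJ : Fin n) : Cfg n :=
  ⟨x.1 * Equiv.swap iI iJ,
   fun k => if k = iI then nμ i₀ j₀ CM x A iI iJ
     else if k = iJ then nμ i₀ j₀ CM x A iJ iI
     else x.2 k⟩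

/-- data for a legitimate swap. -/
structure SwapData (x : Cfg n) (A c : ℕ) (iI iJ : Fin n) : Prop where
  hne : iI ≠ iJ
  hOnI : OnP (i₀ + ((x.1 iI : Fin n) : ℕ)) (D i₀ j₀ CM x iI) (A, c)
  hOnJ : OnP (i₀ + ((x.1 iJ : Fin n) : ℕ)) (D i₀ j₀ CM x iJ) (A, c)
  hmin : ∀ a' c', SharedPt i₀ j₀ CM x (a', c') → A < a' ∨ (A = a' ∧ c ≤ c')

variable {i₀ j₀ CM : ℕ}

lemma sd_symm {x : Cfg n} {A c : ℕ} {iI iJ : Fin n} (sd : SwapData i₀ j₀ CM x A c iI iJ) :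
    SwapData i₀ j₀ CM x A c iJ iI :=
  ⟨sd.hne.symm, sd.hOnJ, sd.hOnI, sd.hmin⟩

section SwapLemmas

variable {f : ℕ → ℕ} {N : ℕ} {x : Cfg n} {A c : ℕ} {iI iJ : Fin n}
variable (hf : Antitone f) (hN : f N = 0)
variable (hCM : j₀ + n + f 0 ≤ CM)
variable (hrk : ∀ b, b < i₀ + (n - 1) → j₀ + (n - 1) ≤ f b)
variable (hx : x ∈ bigset f i₀ j₀ hf hN n)
variable (sd : SwapData i₀ j₀ CM x A c iI iJ)

include hf hN hCM hx sd

lemma vd_of_mem (k : Fin n) :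
    Vd f CM (i₀ + ((x.1 k : Fin n) : ℕ)) (j₀ + (k : ℕ)) (D i₀ j₀ CM x k) := by
  apply Vd_mkd hf ((mem_bigset i₀ j₀).mp hx k)
  have : (k : ℕ) < n := k.isLt
  omega

lemma one_le_A : 1 ≤ A := by
  have h1 : i₀ + ((x.1 iI : Fin n) : ℕ) ≤ A := sd.hOnI.1
  have h2 : i₀ + ((x.1 iJ : Fin n) : ℕ) ≤ A := sd.hOnJ.1
  have h3 : ((x.1 iI : Fin n) : ℕ) ≠ ((x.1 iJ : Fin n) : ℕ) := by
    intro h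
    exact sd.hne (x.1.injective (Fin.ext h))
  omega

include hrk

/-- validity of the head of path `iJ` for the new sink `CI`. -/
lemma head_valid :
    ∀ a, i₀ + ((x.1 iJ : Fin n) : ℕ) ≤ a → a < A →
      (j₀ + (iI : ℕ)) ≤ D i₀ j₀ CM x iJ a ∧
      D i₀ j₀ CM x iJ a ≤ max (f a) (j₀ + (iI : ℕ)) := by
  apply L_key hf (vd_of_mem hf hN hCM hx sd iI) (vd_of_mem hf hN hCM hx sd iJ)
    (show j₀ + (iI : ℕ) ≠ j₀ + (iJ : ℕ) by
      intro h; exact sd.hne (Fin.ext (by omega)))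
    sd.hOnI sd.hOnJ (one_le_A hf hN hCM hx sd)
  · intro a' c' h1 h2
    exact sd.hmin a' c' ⟨iI, iJ, sd.hne, h1, h2⟩
  · intro hRA b hb
    have hiJ : (iJ : ℕ) ≤ n - 1 := by have := iJ.isLt; omega
    have hA : A ≤ i₀ + (n - 1) := by
      rw [← hRA]
      have : ((x.1 iI : Fin n) : ℕ) < n := (x.1 iI).isLt
      omega
    have := hrk b (by omega)
    omega

end SwapLemmas

/-- abstract version: the spliced path is the path of an admissible partition. -/
lemma spl_spec {f : ℕ → ℕ} {CM R1 C1 R2 C2 A c : ℕ} {d1 d2 : ℕ → ℕ}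
    (v1 : Vd f CM R1 C1 d1) (v2 : Vd f CM R2 C2 d2)
    (hd : ∀ a, R2 ≤ a → a < A → C1 ≤ d2 a ∧ d2 a ≤ max (f a) C1)
    (hOnI : OnP R1 d1 (A, c)) (hOnJ : OnP R2 d2 (A, c)) (h1A : 1 ≤ A) :
    mkd CM R2 C1 (fun u => spl A d2 d1 (R2 + u) - C1) = spl A d2 d1 ∧
      (fun u => spl A d2 d1 (R2 + u) - C1) ∈ Sset f R2 C1 := by
  have hOnI1 : R1 ≤ A := hOnI.1
  have hOnI2 : d1 A ≤ c := hOnI.2.1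
  have hOnI3 : c ≤ d1 (A - 1) := hOnI.2.2
  have hOnJ1 : R2 ≤ A := hOnJ.1
  have hOnJ2 : d2 A ≤ c := hOnJ.2.1
  have hOnJ3 : c ≤ d2 (A - 1) := hOnJ.2.2
  have hlow : ∀ a, R2 ≤ a → C1 ≤ spl A d2 d1 a := by
    intro a ha
    rw [spl]
    by_cases h : a < A
    · rw [if_pos h]
      exact (hd a ha h).1
    · rw [if_neg h]
      exact v1.lb a (by omega)
  have hup : ∀ a, R2 ≤ a → spl A d2 d1 a ≤ max (f a) C1 := by
    intro a ha
    rw [spl]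
    by_cases h : a < A
    · rw [if_pos h]
      exact (hd a ha h).2
    · rw [if_neg h]
      exact v1.ub a (by omega)
  have hanti : ∀ a b, R2 ≤ a → a ≤ b → spl A d2 d1 b ≤ spl A d2 d1 a := by
    intro a b ha hab
    rw [spl, spl]
    by_cases h1 : a < A
    · rw [if_pos h1]
      by_cases h2 : b < A
      · rw [if_pos h2]; exact v2.anti hab
      · rw [if_neg h2]
        calc d1 b ≤ d1 A := v1.anti (by omega)
          _ ≤ c := hOnI2
          _ ≤ d2 (A - 1) := hOnJ3
          _ ≤ d2 a := v2.anti (by omega)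
    · rw [if_neg h1, if_neg (by omega)]
      exact v1.anti hab
  constructor
  · funext a
    rw [mkd]
    by_cases h : a < R2
    · rw [if_pos h, spl, if_pos (by omega), v2.top a (by omega)]
    · rw [if_neg h]
      have h1 := hlow (R2 + (a - R2)) (by omega)
      show C1 + (spl A d2 d1 (R2 + (a - R2)) - C1) = spl A d2 d1 a
      rw [show R2 + (a - R2) = a by omega] at h1 ⊢
      omega
  · constructor
    · intro u v huv
      show spl A d2 d1 (R2 + v) - C1 ≤ spl A d2 d1 (R2 + u) - C1
      have h1 := hanti (R2 + u) (R2 + v) (by omega) (by omega)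
      omega
    · intro k
      show spl A d2 d1 (R2 + k) - C1 ≤ f (R2 + k) - C1
      have h1 := hup (R2 + k) (by omega)
      omega

/-! ### Part C3 : consequences of the swap -/

lemma Cfg.ext {x y : Cfg n} (h1 : x.1 = y.1) (h2 : x.2 = y.2) : x = y := by
  cases x; cases y
  simp only at h1 h2
  subst h1; subst h2; rfl

lemma swap_fst_I {x : Cfg n} {A : ℕ} {iI iJ : Fin n} :
    (swapCfg i₀ j₀ CM x A iI iJ).1 iI = x.1 iJ := by
  rw [swapCfg]
  simp [Equiv.Perm.mul_apply, Equiv.swap_apply_left]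

lemma swap_fst_J {x : Cfg n} {A : ℕ} {iI iJ : Fin n} :
    (swapCfg i₀ j₀ CM x A iI iJ).1 iJ = x.1 iI := by
  rw [swapCfg]
  simp [Equiv.Perm.mul_apply, Equiv.swap_apply_right]

lemma swap_fst_other {x : Cfg n} {A : ℕ} {iI iJ k : Fin n} (h1 : k ≠ iI) (h2 : k ≠ iJ) :
    (swapCfg i₀ j₀ CM x A iI iJ).1 k = x.1 k := by
  rw [swapCfg]
  simp [Equiv.Perm.mul_apply, Equiv.swap_apply_of_ne_of_ne h1 h2]

lemma swap_snd_I {x : Cfg n} {A : ℕ} {iI iJ : Fin n} :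
    (swapCfg i₀ j₀ CM x A iI iJ).2 iI = nμ i₀ j₀ CM x A iI iJ := by
  rw [swapCfg]; simp

lemma swap_snd_J {x : Cfg n} {A : ℕ} {iI iJ : Fin n} (hne : iI ≠ iJ) :
    (swapCfg i₀ j₀ CM x A iI iJ).2 iJ = nμ i₀ j₀ CM x A iJ iI := by
  rw [swapCfg]; simp [hne.symm]

lemma swap_snd_other {x : Cfg n} {A : ℕ} {iI iJ k : Fin n} (h1 : k ≠ iI) (h2 : k ≠ iJ) :
    (swapCfg i₀ j₀ CM x A iI iJ).2 k = x.2 k := by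
  rw [swapCfg]; simp [h1, h2]

section SwapLemmas2

variable {f : ℕ → ℕ} {N : ℕ} {x : Cfg n} {A c : ℕ} {iI iJ : Fin n}
variable (hf : Antitone f) (hN : f N = 0)
variable (hCM : j₀ + n + f 0 ≤ CM)
variable (hrk : ∀ b, b < i₀ + (n - 1) → j₀ + (n - 1) ≤ f b)
variable (hx : x ∈ bigset f i₀ j₀ hf hN n)
variable (sd : SwapData i₀ j₀ CM x A c iI iJ)

include hf hN hCM hrk hx sd

lemma nμ_spec :
    mkd CM (i₀ + ((x.1 iJ : Fin n) : ℕ)) (j₀ + (iI : ℕ)) (nμ i₀ j₀ CM x A iI iJ)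
        = spl A (D i₀ j₀ CM x iJ) (D i₀ j₀ CM x iI) ∧
      nμ i₀ j₀ CM x A iI iJ ∈ Sset f (i₀ + ((x.1 iJ : Fin n) : ℕ)) (j₀ + (iI : ℕ)) :=
  spl_spec (vd_of_mem hf hN hCM hx sd iI) (vd_of_mem hf hN hCM hx sd iJ)
    (head_valid hf hN hCM hrk hx sd) sd.hOnI sd.hOnJ (one_le_A hf hN hCM hx sd)

lemma swapCfg_mem : swapCfg i₀ j₀ CM x A iI iJ ∈ bigset f i₀ j₀ hf hN n := by
  rw [mem_bigset]
  intro k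
  by_cases h1 : k = iI
  · subst h1
    rw [swap_snd_I, swap_fst_I]
    exact (nμ_spec hf hN hCM hrk hx sd).2
  · by_cases h2 : k = iJ
    · subst h2
      rw [swap_snd_J sd.hne, swap_fst_J]
      exact (nμ_spec hf hN hCM hrk hx (sd_symm sd)).2
    · rw [swap_snd_other h1 h2, swap_fst_other h1 h2]
      exact (mem_bigset i₀ j₀).mp hx k

lemma D_swap_I :
    D i₀ j₀ CM (swapCfg i₀ j₀ CM x A iI iJ) iI
      = spl A (D i₀ j₀ CM x iJ) (D i₀ j₀ CM x iI) := by
  rw [D, swap_snd_I, swap_fst_I]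
  exact (nμ_spec hf hN hCM hrk hx sd).1

lemma D_swap_J :
    D i₀ j₀ CM (swapCfg i₀ j₀ CM x A iI iJ) iJ
      = spl A (D i₀ j₀ CM x iI) (D i₀ j₀ CM x iJ) := by
  rw [D, swap_snd_J sd.hne, swap_fst_J]
  exact (nμ_spec hf hN hCM hrk hx (sd_symm sd)).1

omit hf hN hCM hrk hx sd in
lemma D_swap_other {k : Fin n} (h1 : k ≠ iI) (h2 : k ≠ iJ) :
    D i₀ j₀ CM (swapCfg i₀ j₀ CM x A iI iJ) k = D i₀ j₀ CM x k := by
  rw [D, swap_snd_other h1 h2, swap_fst_other h1 h2, D]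

lemma swap_shared : SharedPt i₀ j₀ CM (swapCfg i₀ j₀ CM x A iI iJ) (A, c) := by
  have h1A := one_le_A hf hN hCM hx sd
  refine ⟨iI, iJ, sd.hne, ?_, ?_⟩
  · rw [swap_fst_I, D_swap_I hf hN hCM hrk hx sd]
    refine ⟨sd.hOnJ.1, ?_, ?_⟩
    · show spl A (D i₀ j₀ CM x iJ) (D i₀ j₀ CM x iI) A ≤ c
      rw [spl, if_neg (by omega)]
      exact sd.hOnI.2.1
    · show c ≤ spl A (D i₀ j₀ CM x iJ) (D i₀ j₀ CM x iI) (A - 1)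
      rw [spl, if_pos (by omega)]
      exact sd.hOnJ.2.2
  · rw [swap_fst_J, D_swap_J hf hN hCM hrk hx sd]
    refine ⟨sd.hOnI.1, ?_, ?_⟩
    · show spl A (D i₀ j₀ CM x iI) (D i₀ j₀ CM x iJ) A ≤ c
      rw [spl, if_neg (by omega)]
      exact sd.hOnJ.2.1
    · show c ≤ spl A (D i₀ j₀ CM x iI) (D i₀ j₀ CM x iJ) (A - 1)
      rw [spl, if_pos (by omega)]
      exact sd.hOnI.2.2

/-- shared points of the swapped configuration that are not lex-above `(A, c)`
come from shared points of `x`. -/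
lemma back_stab {a' c' : ℕ} (hsh : SharedPt i₀ j₀ CM (swapCfg i₀ j₀ CM x A iI iJ) (a', c'))
    (hcase : a' < A ∨ (a' = A ∧ c' < c)) : SharedPt i₀ j₀ CM x (a', c') := by
  have h1A := one_le_A hf hN hCM hx sd
  obtain ⟨k, l, hkl, hOk, hOl⟩ := hsh
  rcases hcase with hlt | ⟨hEq, hclt⟩
  · -- strictly above the swap row : relabel by the transposition
    have key : ∀ m : Fin n,
        OnP (i₀ + (((swapCfg i₀ j₀ CM x A iI iJ).1 m : Fin n) : ℕ))
          (D i₀ j₀ CM (swapCfg i₀ j₀ CM x A iI iJ) m) (a', c') →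
        OnP (i₀ + ((x.1 (Equiv.swap iI iJ m) : Fin n) : ℕ)) (D i₀ j₀ CM x (Equiv.swap iI iJ m))
          (a', c') := by
      intro m hm
      by_cases hmI : m = iI
      · rw [hmI] at hm ⊢
        rw [swap_fst_I, D_swap_I hf hN hCM hrk hx sd] at hm
        rw [Equiv.swap_apply_left]
        have hm2 : spl A (D i₀ j₀ CM x iJ) (D i₀ j₀ CM x iI) a' ≤ c' := hm.2.1
        have hm3 : c' ≤ spl A (D i₀ j₀ CM x iJ) (D i₀ j₀ CM x iI) (a' - 1) := hm.2.2
        rw [spl, if_pos hlt] at hm2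
        rw [spl, if_pos (by omega)] at hm3
        exact ⟨hm.1, hm2, hm3⟩
      · by_cases hmJ : m = iJ
        · rw [hmJ] at hm ⊢
          rw [swap_fst_J, D_swap_J hf hN hCM hrk hx sd] at hm
          rw [Equiv.swap_apply_right]
          have hm2 : spl A (D i₀ j₀ CM x iI) (D i₀ j₀ CM x iJ) a' ≤ c' := hm.2.1
          have hm3 : c' ≤ spl A (D i₀ j₀ CM x iI) (D i₀ j₀ CM x iJ) (a' - 1) := hm.2.2
          rw [spl, if_pos hlt] at hm2
          rw [spl, if_pos (by omega)] at hm3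
          exact ⟨hm.1, hm2, hm3⟩
        · rw [swap_fst_other hmI hmJ, D_swap_other hmI hmJ] at hm
          rw [Equiv.swap_apply_of_ne_of_ne hmI hmJ]
          exact hm
    exact ⟨_, _, fun h => hkl ((Equiv.swap iI iJ).injective h), key k hOk, key l hOl⟩
  · -- on the swap row but strictly left of `c`
    have key : ∀ m : Fin n,
        OnP (i₀ + (((swapCfg i₀ j₀ CM x A iI iJ).1 m : Fin n) : ℕ))
          (D i₀ j₀ CM (swapCfg i₀ j₀ CM x A iI iJ) m) (a', c') →
        OnP (i₀ + ((x.1 m : Fin n) : ℕ)) (D i₀ j₀ CM x m) (a', c') := by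
      intro m hm
      by_cases hmI : m = iI
      · rw [hmI] at hm ⊢
        rw [swap_fst_I, D_swap_I hf hN hCM hrk hx sd] at hm
        have hm2 : spl A (D i₀ j₀ CM x iJ) (D i₀ j₀ CM x iI) a' ≤ c' := hm.2.1
        rw [spl, if_neg (by omega)] at hm2
        refine ⟨by rw [hEq]; exact sd.hOnI.1, hm2, ?_⟩
        show c' ≤ D i₀ j₀ CM x iI (a' - 1)
        rw [hEq]
        have h3 : c ≤ D i₀ j₀ CM x iI (A - 1) := sd.hOnI.2.2
        omega
      · by_cases hmJ : m = iJ
        · rw [hmJ] at hm ⊢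
          rw [swap_fst_J, D_swap_J hf hN hCM hrk hx sd] at hm
          have hm2 : spl A (D i₀ j₀ CM x iI) (D i₀ j₀ CM x iJ) a' ≤ c' := hm.2.1
          rw [spl, if_neg (by omega)] at hm2
          refine ⟨by rw [hEq]; exact sd.hOnJ.1, hm2, ?_⟩
          show c' ≤ D i₀ j₀ CM x iJ (a' - 1)
          rw [hEq]
          have h3 : c ≤ D i₀ j₀ CM x iJ (A - 1) := sd.hOnJ.2.2
          omega
        · rw [swap_fst_other hmI hmJ, D_swap_other hmI hmJ] at hm
          exact hm
    exact ⟨k, l, hkl, key k hOk, key l hOl⟩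

lemma swap_min : ∀ a' c', SharedPt i₀ j₀ CM (swapCfg i₀ j₀ CM x A iI iJ) (a', c') →
    A < a' ∨ (A = a' ∧ c ≤ c') := by
  intro a' c' hsh
  by_contra hcon
  push_neg at hcon
  have hcase : a' < A ∨ (a' = A ∧ c' < c) := by omega
  have := sd.hmin a' c' (back_stab hf hN hCM hrk hx sd hsh hcase)
  omega

/-- the swap is an involution. -/
lemma double_swap :
    swapCfg i₀ j₀ CM (swapCfg i₀ j₀ CM x A iI iJ) A iI iJ = x := by
  apply Cfg.ext
  · show (x.1 * Equiv.swap iI iJ) * Equiv.swap iI iJ = x.1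
    rw [mul_assoc, Equiv.swap_mul_self, mul_one]
  · funext k
    by_cases h1 : k = iI
    · rw [h1]
      rw [swap_snd_I]
      funext u
      rw [nμ]
      rw [swap_fst_J, D_swap_I hf hN hCM hrk hx sd, D_swap_J hf hN hCM hrk hx sd]
      have hspl : ∀ a, spl A (spl A (D i₀ j₀ CM x iI) (D i₀ j₀ CM x iJ))
          (spl A (D i₀ j₀ CM x iJ) (D i₀ j₀ CM x iI)) a = D i₀ j₀ CM x iI a := by
        intro a
        rw [spl, spl, spl]
        by_cases h : a < A
        · rw [if_pos h, if_pos h]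
        · rw [if_neg h, if_neg h]
      rw [hspl]
      rw [D, mkd, if_neg (by omega)]
      rw [show i₀ + ((x.1 iI : Fin n) : ℕ) + u - (i₀ + ((x.1 iI : Fin n) : ℕ)) = u by omega]
      omega
    · by_cases h2 : k = iJ
      · rw [h2]
        rw [swap_snd_J sd.hne]
        funext u
        rw [nμ]
        rw [swap_fst_I, D_swap_I hf hN hCM hrk hx sd, D_swap_J hf hN hCM hrk hx sd]
        have hspl : ∀ a, spl A (spl A (D i₀ j₀ CM x iJ) (D i₀ j₀ CM x iI))
            (spl A (D i₀ j₀ CM x iI) (D i₀ j₀ CM x iJ)) a = D i₀ j₀ CM x iJ a := by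
          intro a
          rw [spl, spl, spl]
          by_cases h : a < A
          · rw [if_pos h, if_pos h]
          · rw [if_neg h, if_neg h]
        rw [hspl]
        rw [D, mkd, if_neg (by omega)]
        rw [show i₀ + ((x.1 iJ : Fin n) : ℕ) + u - (i₀ + ((x.1 iJ : Fin n) : ℕ)) = u by omega]
        omega
      · rw [swap_snd_other h1 h2, swap_snd_other h1 h2]

end SwapLemmas2

/-! ### Part C4 : weights and the involution -/

lemma wt_split {f : ℕ → ℕ} {NB A : ℕ} (hANB : A ≤ NB) (d : ℕ → ℕ) :
    wt f NB d = (∏ a ∈ Finset.Ico 0 A, rw1 f a (d a)) * ∏ a ∈ Finset.Ico A NB, rw1 f a (d a) := by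
  rw [wt, Finset.range_eq_Ico, Finset.prod_Ico_consecutive _ (Nat.zero_le A) hANB]

lemma wt_spl_mul {f : ℕ → ℕ} {NB A : ℕ} (hANB : A ≤ NB) (d e : ℕ → ℕ) :
    wt f NB (spl A d e) * wt f NB (spl A e d) = wt f NB d * wt f NB e := by
  have h1 : ∀ d e : ℕ → ℕ, wt f NB (spl A d e)
      = (∏ a ∈ Finset.Ico 0 A, rw1 f a (d a)) * ∏ a ∈ Finset.Ico A NB, rw1 f a (e a) := by
    intro d e
    rw [wt_split hANB]
    congr 1
    · apply Finset.prod_congr rfl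
      intro a ha
      simp only [Finset.mem_Ico] at ha
      rw [spl, if_pos ha.2]
    · apply Finset.prod_congr rfl
      intro a ha
      simp only [Finset.mem_Ico] at ha
      rw [spl, if_neg (by omega)]
  rw [h1, h1, wt_split hANB d, wt_split hANB e]
  ring

lemma prod_pair_swap {M : Type*} [CommMonoid M] {g g' : Fin n → M} {iI iJ : Fin n}
    (hne : iI ≠ iJ) (hoff : ∀ k, k ≠ iI → k ≠ iJ → g' k = g k)
    (hpair : g' iI * g' iJ = g iI * g iJ) : ∏ k, g' k = ∏ k, g k := by
  classical
  have hJmem : iJ ∈ (Finset.univ : Finset (Fin n)).erase iI :=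
    Finset.mem_erase.mpr ⟨hne.symm, Finset.mem_univ _⟩
  rw [← Finset.mul_prod_erase Finset.univ g' (Finset.mem_univ iI),
      ← Finset.mul_prod_erase Finset.univ g (Finset.mem_univ iI),
      ← Finset.mul_prod_erase _ g' hJmem, ← Finset.mul_prod_erase _ g hJmem,
      ← mul_assoc, ← mul_assoc, hpair]
  congr 1
  apply Finset.prod_congr rfl
  intro k hk
  simp only [Finset.mem_erase] at hk
  exact hoff k hk.2.1 hk.1

section SwapLemmas3

variable {f : ℕ → ℕ} {N : ℕ} {x : Cfg n} {A c : ℕ} {iI iJ : Fin n}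
variable (hf : Antitone f) (hN : f N = 0)
variable (hCM : j₀ + n + f 0 ≤ CM)
variable (hrk : ∀ b, b < i₀ + (n - 1) → j₀ + (n - 1) ≤ f b)
variable (hx : x ∈ bigset f i₀ j₀ hf hN n)
variable (sd : SwapData i₀ j₀ CM x A c iI iJ)

include hf hN hCM hrk hx sd

lemma W_swap {NB : ℕ} (hANB : A ≤ NB) :
    ∏ i : Fin n, wt f NB (D i₀ j₀ CM (swapCfg i₀ j₀ CM x A iI iJ) i)
      = ∏ i : Fin n, wt f NB (D i₀ j₀ CM x i) := by
  apply prod_pair_swap sd.hne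
  · intro k h1 h2
    rw [D_swap_other h1 h2]
  · rw [D_swap_I hf hN hCM hrk hx sd, D_swap_J hf hN hCM hrk hx sd]
    rw [wt_spl_mul hANB]
    ring

end SwapLemmas3

lemma shared_bound {f : ℕ → ℕ} {N : ℕ} {hf : Antitone f} {hN : f N = 0} {x : Cfg n}
    (hCM : j₀ + n + f 0 ≤ CM)
    (hx : x ∈ bigset f i₀ j₀ hf hN n) {p : ℕ × ℕ} (hp : SharedPt i₀ j₀ CM x p) :
    p.1 < i₀ + n + N := by
  obtain ⟨i, j, hij, hOi, hOj⟩ := hp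
  by_contra hge
  push_neg at hge
  have hkey : ∀ k : Fin n, OnP (i₀ + ((x.1 k : Fin n) : ℕ)) (D i₀ j₀ CM x k) p →
      p.2 = j₀ + (k : ℕ) := by
    intro k hOk
    have hv := Vd_mkd hf ((mem_bigset i₀ j₀).mp hx k)
      (show (j₀ + (k : ℕ)) + f 0 ≤ CM by have := k.isLt; omega)
    have hlt : ((x.1 k : Fin n) : ℕ) < n := (x.1 k).isLt
    have e1 : D i₀ j₀ CM x k p.1 = j₀ + (k : ℕ) :=
      L_deep hf hN hv p.1 (by omega) (by omega)
    have e2 : D i₀ j₀ CM x k (p.1 - 1) = j₀ + (k : ℕ) :=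
      L_deep hf hN hv (p.1 - 1) (by omega) (by omega)
    have h1 : D i₀ j₀ CM x k p.1 ≤ p.2 := hOk.2.1
    have h2 : p.2 ≤ D i₀ j₀ CM x k (p.1 - 1) := hOk.2.2
    omega
  have h1 := hkey i hOi
  have h2 := hkey j hOj
  exact hij (Fin.ext (by omega))


section SelDefs

variable (i₀ j₀ CM : ℕ)


def selA (x : Cfg n) : ℕ := sInf {a | ∃ c, SharedPt i₀ j₀ CM x (a, c)}

def selC (x : Cfg n) : ℕ := sInf {c | SharedPt i₀ j₀ CM x (selA i₀ j₀ CM x, c)}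

def selT (x : Cfg n) : Set ℕ := {m : ℕ | ∃ hm : m < n,
  OnP (i₀ + ((x.1 ⟨m, hm⟩ : Fin n) : ℕ)) (D i₀ j₀ CM x ⟨m, hm⟩)
    (selA i₀ j₀ CM x, selC i₀ j₀ CM x)}

def selI (x : Cfg n) : ℕ := sInf (selT i₀ j₀ CM x)

def selJ (x : Cfg n) : ℕ := sInf (selT i₀ j₀ CM x \ {selI i₀ j₀ CM x})

open scoped Classical in
/-- the involution. -/
noncomputable def G (x : Cfg n) : Cfg n :=
  if _ : ∃ p, SharedPt i₀ j₀ CM x p then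
    if hIJ : selI i₀ j₀ CM x < n ∧ selJ i₀ j₀ CM x < n then
      swapCfg i₀ j₀ CM x (selA i₀ j₀ CM x) ⟨selI i₀ j₀ CM x, hIJ.1⟩ ⟨selJ i₀ j₀ CM x, hIJ.2⟩
    else x
  else x

section Sel

variable {x : Cfg n} (hsh : ∃ p, SharedPt i₀ j₀ CM x p)
include hsh

lemma sel_shared : SharedPt i₀ j₀ CM x (selA i₀ j₀ CM x, selC i₀ j₀ CM x) := by
  have h1 : ∃ c, SharedPt i₀ j₀ CM x (selA i₀ j₀ CM x, c) := by
    apply Nat.sInf_mem (s := {a | ∃ c, SharedPt i₀ j₀ CM x (a, c)})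
    obtain ⟨p, hp⟩ := hsh
    exact ⟨p.1, p.2, by rwa [Prod.mk.eta]⟩
  exact Nat.sInf_mem h1

lemma sel_min : ∀ a' c', SharedPt i₀ j₀ CM x (a', c') →
    selA i₀ j₀ CM x < a' ∨ (selA i₀ j₀ CM x = a' ∧ selC i₀ j₀ CM x ≤ c') := by
  intro a' c' h
  have h1 : selA i₀ j₀ CM x ≤ a' := Nat.sInf_le ⟨c', h⟩
  rcases eq_or_lt_of_le h1 with hEq | hlt
  · right
    refine ⟨hEq, Nat.sInf_le ?_⟩
    show SharedPt i₀ j₀ CM x (selA i₀ j₀ CM x, c')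
    rwa [hEq]
  · left; exact hlt

lemma sel_mem : ∃ (hI : selI i₀ j₀ CM x < n) (hJ : selJ i₀ j₀ CM x < n),
    selI i₀ j₀ CM x ≠ selJ i₀ j₀ CM x ∧
    OnP (i₀ + ((x.1 ⟨selI i₀ j₀ CM x, hI⟩ : Fin n) : ℕ)) (D i₀ j₀ CM x ⟨selI i₀ j₀ CM x, hI⟩)
      (selA i₀ j₀ CM x, selC i₀ j₀ CM x) ∧
    OnP (i₀ + ((x.1 ⟨selJ i₀ j₀ CM x, hJ⟩ : Fin n) : ℕ)) (D i₀ j₀ CM x ⟨selJ i₀ j₀ CM x, hJ⟩)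
      (selA i₀ j₀ CM x, selC i₀ j₀ CM x) := by
  obtain ⟨i, j, hij, hOi, hOj⟩ := sel_shared i₀ j₀ CM hsh
  have hiT : (i : ℕ) ∈ selT i₀ j₀ CM x := ⟨i.isLt, by simpa using hOi⟩
  have hjT : (j : ℕ) ∈ selT i₀ j₀ CM x := ⟨j.isLt, by simpa using hOj⟩
  have hIT : selI i₀ j₀ CM x ∈ selT i₀ j₀ CM x := Nat.sInf_mem ⟨_, hiT⟩
  have hTJne : (selT i₀ j₀ CM x \ {selI i₀ j₀ CM x}).Nonempty := by
    by_cases h : (i : ℕ) = selI i₀ j₀ CM x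
    · refine ⟨j, hjT, ?_⟩
      simp only [Set.mem_singleton_iff]
      intro h2
      exact hij (Fin.ext (by omega))
    · exact ⟨i, hiT, h⟩
  have hJT : selJ i₀ j₀ CM x ∈ selT i₀ j₀ CM x \ {selI i₀ j₀ CM x} := Nat.sInf_mem hTJne
  obtain ⟨hIlt, hOI⟩ := hIT
  obtain ⟨⟨hJlt, hOJ⟩, hJne⟩ := hJT
  simp only [Set.mem_singleton_iff] at hJne
  exact ⟨hIlt, hJlt, fun h => hJne h.symm, hOI, hOJ⟩

lemma sel_sd : ∀ (hI : selI i₀ j₀ CM x < n) (hJ : selJ i₀ j₀ CM x < n),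
    SwapData i₀ j₀ CM x (selA i₀ j₀ CM x) (selC i₀ j₀ CM x)
      ⟨selI i₀ j₀ CM x, hI⟩ ⟨selJ i₀ j₀ CM x, hJ⟩ := by
  intro hI hJ
  obtain ⟨hI', hJ', hne, hOI, hOJ⟩ := sel_mem i₀ j₀ CM hsh
  exact ⟨fun h => hne (by rw [Fin.ext_iff] at h; exact h), hOI, hOJ, sel_min i₀ j₀ CM hsh⟩

lemma G_eq : ∃ (hI : selI i₀ j₀ CM x < n) (hJ : selJ i₀ j₀ CM x < n),
    G i₀ j₀ CM x = swapCfg i₀ j₀ CM x (selA i₀ j₀ CM x)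
      ⟨selI i₀ j₀ CM x, hI⟩ ⟨selJ i₀ j₀ CM x, hJ⟩ := by
  obtain ⟨hI, hJ, _⟩ := sel_mem i₀ j₀ CM hsh
  refine ⟨hI, hJ, ?_⟩
  rw [G, dif_pos hsh, dif_pos ⟨hI, hJ⟩]

end Sel

end SelDefs

section GSpec

variable (i₀ j₀ CM : ℕ) {n : ℕ}
variable {f : ℕ → ℕ} {N : ℕ} {x : Cfg n}
variable (hf : Antitone f) (hN : f N = 0)
variable (hCM : j₀ + n + f 0 ≤ CM)
variable (hrk : ∀ b, b < i₀ + (n - 1) → j₀ + (n - 1) ≤ f b)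
variable (hx : x ∈ bigset f i₀ j₀ hf hN n)
variable (hsh : ∃ p, SharedPt i₀ j₀ CM x p)

include hf hN hCM hrk hx hsh

lemma G_spec :
    G i₀ j₀ CM x ∈ bigset f i₀ j₀ hf hN n ∧
    (∃ iI iJ : Fin n, iI ≠ iJ ∧ (G i₀ j₀ CM x).1 = x.1 * Equiv.swap iI iJ) ∧
    (∀ NB : ℕ, i₀ + n + N ≤ NB →
      ∏ i : Fin n, wt f NB (D i₀ j₀ CM (G i₀ j₀ CM x) i)
        = ∏ i : Fin n, wt f NB (D i₀ j₀ CM x i)) ∧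
    G i₀ j₀ CM (G i₀ j₀ CM x) = x ∧
    G i₀ j₀ CM x ≠ x ∧
    G i₀ j₀ CM x ≠ good n := by
  classical
  obtain ⟨hI, hJ, hGeq⟩ := G_eq i₀ j₀ CM hsh
  set iI : Fin n := ⟨selI i₀ j₀ CM x, hI⟩ with hiI
  set iJ : Fin n := ⟨selJ i₀ j₀ CM x, hJ⟩ with hiJ
  have sd := sel_sd i₀ j₀ CM hsh hI hJ
  set A := selA i₀ j₀ CM x with hA
  set c := selC i₀ j₀ CM x with hc
  set y := swapCfg i₀ j₀ CM x A iI iJ with hy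
  have hymem : y ∈ bigset f i₀ j₀ hf hN n := swapCfg_mem hf hN hCM hrk hx sd
  have hyshared : SharedPt i₀ j₀ CM y (A, c) := swap_shared hf hN hCM hrk hx sd
  have hymin := swap_min hf hN hCM hrk hx sd
  have hsh' : ∃ p, SharedPt i₀ j₀ CM y p := ⟨(A, c), hyshared⟩
  -- stability of the selected data
  have hselAy : selA i₀ j₀ CM y = A := by
    have h1 : selA i₀ j₀ CM y ≤ A := Nat.sInf_le ⟨c, hyshared⟩
    have h2 := sel_shared i₀ j₀ CM hsh'
    have h3 := hymin _ _ h2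
    omega
  have hselCy : selC i₀ j₀ CM y = c := by
    have h2 := sel_shared i₀ j₀ CM hsh'
    rw [hselAy] at h2
    have h1 : selC i₀ j₀ CM y ≤ c := by
      apply Nat.sInf_le
      show SharedPt i₀ j₀ CM y (selA i₀ j₀ CM y, c)
      rwa [hselAy]
    have h3 := hymin _ _ h2
    omega
  have hOnyI : OnP (i₀ + ((y.1 iI : Fin n) : ℕ)) (D i₀ j₀ CM y iI) (A, c) := by
    obtain ⟨i', j', hij', hO1, hO2⟩ := hyshared
    -- direct : recompute as in swap_shared
    rw [swap_fst_I, D_swap_I hf hN hCM hrk hx sd]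
    have h1A := one_le_A hf hN hCM hx sd
    refine ⟨sd.hOnJ.1, ?_, ?_⟩
    · show spl A (D i₀ j₀ CM x iJ) (D i₀ j₀ CM x iI) A ≤ c
      rw [spl, if_neg (by omega)]
      exact sd.hOnI.2.1
    · show c ≤ spl A (D i₀ j₀ CM x iJ) (D i₀ j₀ CM x iI) (A - 1)
      rw [spl, if_pos (by omega)]
      exact sd.hOnJ.2.2
  have hOnyJ : OnP (i₀ + ((y.1 iJ : Fin n) : ℕ)) (D i₀ j₀ CM y iJ) (A, c) := by
    rw [swap_fst_J, D_swap_J hf hN hCM hrk hx sd]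
    have h1A := one_le_A hf hN hCM hx sd
    refine ⟨sd.hOnI.1, ?_, ?_⟩
    · show spl A (D i₀ j₀ CM x iI) (D i₀ j₀ CM x iJ) A ≤ c
      rw [spl, if_neg (by omega)]
      exact sd.hOnJ.2.1
    · show c ≤ spl A (D i₀ j₀ CM x iI) (D i₀ j₀ CM x iJ) (A - 1)
      rw [spl, if_pos (by omega)]
      exact sd.hOnI.2.2
  have hselTy : selT i₀ j₀ CM y = selT i₀ j₀ CM x := by
    apply Set.ext
    intro m
    rw [selT, selT, hselAy, hselCy, ← hA, ← hc]
    constructor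
    · rintro ⟨hm, hOm⟩
      refine ⟨hm, ?_⟩
      by_cases hmI : (⟨m, hm⟩ : Fin n) = iI
      · rw [hmI]; exact sd.hOnI
      · by_cases hmJ : (⟨m, hm⟩ : Fin n) = iJ
        · rw [hmJ]; exact sd.hOnJ
        · rwa [swap_fst_other hmI hmJ, D_swap_other hmI hmJ] at hOm
    · rintro ⟨hm, hOm⟩
      refine ⟨hm, ?_⟩
      by_cases hmI : (⟨m, hm⟩ : Fin n) = iI
      · rw [hmI]; exact hOnyI
      · by_cases hmJ : (⟨m, hm⟩ : Fin n) = iJ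
        · rw [hmJ]; exact hOnyJ
        · rwa [swap_fst_other hmI hmJ, D_swap_other hmI hmJ]
  have hselIy : selI i₀ j₀ CM y = selI i₀ j₀ CM x := by
    rw [selI, selI, hselTy]
  have hselJy : selJ i₀ j₀ CM y = selJ i₀ j₀ CM x := by
    rw [selJ, selJ, hselTy, hselIy]
  refine ⟨?_, ?_, ?_, ?_, ?_, ?_⟩
  · rw [hGeq]; exact hymem
  · exact ⟨iI, iJ, sd.hne, by rw [hGeq]; rfl⟩
  · intro NB hNB
    rw [hGeq]
    apply W_swap hf hN hCM hrk hx sd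
    have := shared_bound hCM hx (sel_shared i₀ j₀ CM hsh)
    omega
  · rw [hGeq]
    obtain ⟨hI', hJ', hGeq'⟩ := G_eq i₀ j₀ CM hsh'
    rw [hGeq']
    have eI : (⟨selI i₀ j₀ CM y, hI'⟩ : Fin n) = iI := by
      rw [hiI]; exact Fin.mk_eq_mk.mpr hselIy
    have eJ : (⟨selJ i₀ j₀ CM y, hJ'⟩ : Fin n) = iJ := by
      rw [hiJ]; exact Fin.mk_eq_mk.mpr hselJy
    rw [hselAy, eI, eJ]
    exact double_swap hf hN hCM hrk hx sd
  · intro hcon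
    rw [hGeq] at hcon
    have h1 : (swapCfg i₀ j₀ CM x A iI iJ).1 = x.1 := congrArg Sigma.fst hcon
    have h2 : x.1 * Equiv.swap iI iJ = x.1 * 1 := by
      rw [mul_one]; exact h1
    have h3 := mul_left_cancel h2
    rw [Equiv.swap_eq_one_iff] at h3
    exact sd.hne h3
  · intro hcon
    rw [hGeq] at hcon
    rw [hcon] at hyshared
    exact good_no_shared i₀ j₀ CM _ hyshared

end GSpec

/-! ### Part D : rank and final assembly -/

lemma rank_iff {f : ℕ → ℕ} (hf : Antitone f) {N : ℕ} (hN : f N = 0) (i₀ j₀ ρ' : ℕ)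
    (hρ' : ρ' = Set.ncard {k : ℕ | k < f (i₀ + k) - j₀}) :
    ∀ k, (k < f (i₀ + k) - j₀ ↔ k < ρ') := by
  set T : Set ℕ := {k | k < f (i₀ + k) - j₀} with hT
  have hdown : ∀ j k : ℕ, j ≤ k → k ∈ T → j ∈ T := by
    intro j k hjk hk
    have h1 : k < f (i₀ + k) - j₀ := hk
    have h2 : f (i₀ + k) ≤ f (i₀ + j) := hf (by omega)
    show j < f (i₀ + j) - j₀
    omega
  have hnc : {k : ℕ | k ∉ T}.Nonempty := by
    refine ⟨N, ?_⟩
    show ¬ (N < f (i₀ + N) - j₀)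
    have : f (i₀ + N) ≤ f N := hf (by omega)
    omega
  set m₀ := sInf {k | k ∉ T} with hm₀
  have hmem : m₀ ∉ T := Nat.sInf_mem hnc
  have h1 : ∀ k, k < m₀ → k ∈ T := by
    intro k hk
    by_contra hkT
    have : m₀ ≤ k := Nat.sInf_le hkT
    omega
  have h2 : ∀ k, m₀ ≤ k → k ∉ T := fun k hk hkT => hmem (hdown m₀ k hk hkT)
  have hTeq : T = Set.Iio m₀ := by
    apply Set.ext
    intro k
    simp only [Set.mem_Iio]
    constructor
    · intro hk
      by_contra hc
      exact h2 k (by omega) hk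
    · exact h1 k
  have hρm : ρ' = m₀ := by
    rw [hρ', hTeq, ← Finset.coe_Iio, Set.ncard_coe_finset, Nat.card_Iio]
  intro k
  constructor
  · intro hk
    rw [hρm]
    by_contra hc
    exact h2 k (by omega) hk
  · intro hk
    exact h1 k (by omega)

lemma wt_eq_one {f : ℕ → ℕ} {NB : ℕ} {d : ℕ → ℕ} (h : ∀ a, f a ≤ d a) :
    wt f NB d = 1 := by
  rw [wt]
  apply Finset.prod_eq_one
  intro a _
  exact rw1_eq_one (h a)

end DetAux
end

/-- **Theorem (determinant of `M(i₀,j₀)`).**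
For a square `(i₀,j₀)` of `λ*` (0-indexed) with `ρ' = rank λ(i₀,j₀)`, the determinant
of the `(ρ'+1) × (ρ'+1)` matrix `M(i₀,j₀)` equals `∏_{k=0}^{ρ'-1} A_{i₀+k, j₀+k}`. -/
theorem det_Mij (f : ℕ → ℕ) (hf : Antitone f) (hfz : ∃ N, f N = 0)
    (i₀ j₀ : ℕ) (hij : MemExt f i₀ j₀)
    (ρ' : ℕ) (hρ' : ρ' = Set.ncard {k : ℕ | k < f (i₀ + k) - j₀}) :
    (Matrix.of (fun r s : Fin (ρ' + 1) => Ppoly f (i₀ + r) (j₀ + s))).det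
      = ∏ k ∈ Finset.range ρ', Apoly f (i₀ + k) (j₀ + k) := by
  classical
  obtain ⟨N, hN⟩ := hfz
  set n := ρ' + 1 with hn
  set CM := j₀ + n + f 0 with hCM0
  set NB := i₀ + n + N with hNB0
  have hdiag := DetAux.rank_iff hf hN i₀ j₀ ρ' hρ'
  have hreg : ∀ m : ℕ, f (i₀ + (n - 1) + m) ≤ j₀ + (n - 1) := by
    intro m
    have h1 : ¬ (ρ' < f (i₀ + ρ') - j₀) := by rw [hdiag]; omega
    have h2 : f (i₀ + ρ' + m) ≤ f (i₀ + ρ') := hf (by omega)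
    rw [show n - 1 = ρ' by omega]
    omega
  have hrk : ∀ b, b < i₀ + (n - 1) → j₀ + (n - 1) ≤ f b := by
    intro b hb
    rw [show n - 1 = ρ' by omega] at hb ⊢
    rcases Nat.eq_zero_or_pos ρ' with h0 | hpos
    · rw [h0] at hb ⊢
      have h1 := hij.2
      have h2 : f i₀ ≤ f b := hf (by omega)
      omega
    · have h1 : (ρ' - 1) < f (i₀ + (ρ' - 1)) - j₀ := (hdiag _).mpr (by omega)
      have h2 : f (i₀ + (ρ' - 1)) ≤ f b := hf (by omega)
      omega
  have hCM : j₀ + n + f 0 ≤ CM := le_refl _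
  have hfCM : f 0 < CM := by omega
  have hNBs : i₀ + n + N ≤ NB := le_refl _
  set F : DetAux.Cfg n → MvPolynomial (ℕ × ℕ) ℤ :=
    fun x => Equiv.Perm.sign x.1 • ∏ i : Fin n, DetAux.wt f NB (DetAux.D i₀ j₀ CM x i) with hF
  have hdet : (Matrix.of (fun r s : Fin (ρ' + 1) => Ppoly f (i₀ + r) (j₀ + s))).det
      = ∑ x ∈ DetAux.bigset f i₀ j₀ hf hN n, F x := by
    rw [Matrix.det_apply]
    have step : ∀ σ : Equiv.Perm (Fin n),
        (Equiv.Perm.sign σ • ∏ i : Fin n,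
          (Matrix.of (fun r s : Fin (ρ' + 1) => Ppoly f (i₀ + r) (j₀ + s))) (σ i) i)
        = ∑ μp ∈ Fintype.piFinset (fun i : Fin n =>
              DetAux.SFin hf hN (i₀ + ((σ i : Fin n) : ℕ)) (j₀ + (i : ℕ))),
            Equiv.Perm.sign σ •
              ∏ i : Fin n, DetAux.wt f NB
                (DetAux.mkd CM (i₀ + ((σ i : Fin n) : ℕ)) (j₀ + (i : ℕ)) (μp i)) := by
      intro σ
      rw [← Finset.smul_sum]
      congr 1
      calc (∏ i : Fin n,
            (Matrix.of (fun r s : Fin (ρ' + 1) => Ppoly f (i₀ + r) (j₀ + s))) (σ i) i)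
          = ∏ i : Fin n, ∑ μ ∈ DetAux.SFin hf hN (i₀ + ((σ i : Fin n) : ℕ)) (j₀ + (i : ℕ)),
              DetAux.wt f NB (DetAux.mkd CM (i₀ + ((σ i : Fin n) : ℕ)) (j₀ + (i : ℕ)) μ) := by
            apply Finset.prod_congr rfl
            intro i _
            rw [Matrix.of_apply]
            exact DetAux.Ppoly_eq hf hN (by have := (σ i).isLt; omega) hfCM
        _ = _ := Finset.prod_univ_sum _ _
    rw [Finset.sum_congr rfl (fun σ _ => step σ)]
    rw [Finset.sum_sigma']
    exact Finset.sum_congr rfl (fun x _ => rfl)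
  rw [hdet, ← Finset.add_sum_erase _ F (DetAux.good_mem i₀ j₀)]
  have hzero : ∑ x ∈ (DetAux.bigset f i₀ j₀ hf hN n).erase (DetAux.good n), F x = 0 := by
    apply Finset.sum_involution (g := fun a _ => DetAux.G i₀ j₀ CM a)
    · intro a ha
      obtain ⟨hane, hamem⟩ := Finset.mem_erase.mp ha
      have hsh := DetAux.exists_shared i₀ j₀ CM hf hN hCM hreg hamem hane
      obtain ⟨hmem, ⟨iI, iJ, hne, hfst⟩, hW, hinv, hnex, hng⟩ :=
        DetAux.G_spec i₀ j₀ CM hf hN hCM hrk hamem hsh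
      simp only [hF]
      rw [hfst, Equiv.Perm.sign_mul, Equiv.Perm.sign_swap hne, hW NB hNBs]
      rw [mul_neg_one, Units.neg_smul]
      exact add_neg_cancel _
    · intro a ha _
      obtain ⟨hane, hamem⟩ := Finset.mem_erase.mp ha
      have hsh := DetAux.exists_shared i₀ j₀ CM hf hN hCM hreg hamem hane
      exact (DetAux.G_spec i₀ j₀ CM hf hN hCM hrk hamem hsh).2.2.2.2.1
    · intro a ha
      obtain ⟨hane, hamem⟩ := Finset.mem_erase.mp ha
      have hsh := DetAux.exists_shared i₀ j₀ CM hf hN hCM hreg hamem hane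
      obtain ⟨hmem, _, _, _, _, hng⟩ := DetAux.G_spec i₀ j₀ CM hf hN hCM hrk hamem hsh
      exact Finset.mem_erase.mpr ⟨hng, hmem⟩
    · intro a ha
      obtain ⟨hane, hamem⟩ := Finset.mem_erase.mp ha
      have hsh := DetAux.exists_shared i₀ j₀ CM hf hN hCM hreg hamem hane
      exact (DetAux.G_spec i₀ j₀ CM hf hN hCM hrk hamem hsh).2.2.2.1
  rw [hzero, add_zero]
  simp only [hF]
  rw [show (DetAux.good n).1 = 1 from rfl, Equiv.Perm.sign_one, one_smul]
  have hstep : ∀ i : Fin n, DetAux.wt f NB (DetAux.D i₀ j₀ CM (DetAux.good n) i)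
      = Apoly f (i₀ + (i : ℕ)) (j₀ + (i : ℕ)) := by
    intro i
    rw [DetAux.D_good]
    exact (DetAux.Apoly_summand_eq hf hN (by have := i.isLt; omega) hfCM).symm
  rw [Finset.prod_congr rfl (fun i _ => hstep i)]
  rw [Fin.prod_univ_eq_prod_range (fun k => Apoly f (i₀ + k) (j₀ + k)) n]
  rw [hn, Finset.prod_range_succ]
  have hlast : Apoly f (i₀ + ρ') (j₀ + ρ') = 1 := by
    rw [DetAux.Apoly_summand_eq hf hN (show (i₀ + ρ') + N ≤ NB by omega) hfCM]
    apply DetAux.wt_eq_one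
    intro a
    simp only [DetAux.mkd]
    by_cases h : a < i₀ + ρ'
    · rw [if_pos h]
      have := hf (Nat.zero_le a)
      omega
    · rw [if_neg h]
      have h2 := hreg (a - (i₀ + ρ'))
      rw [show n - 1 = ρ' by omega] at h2
      rw [show i₀ + ρ' + (a - (i₀ + ρ')) = a by omega] at h2
      omega
  rw [hlast, mul_one]
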